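/- In the A_{2n}^{(2)} perfect crystal B of level l, the extremal elements b_a, defined by b_0 = (0,...,0), b_a = f_{i_a}^{max} b_{a-1}, with i_a = a-1 for 1 ≤ a ≤ n+1 and i_a = 2n+1-a for n+2 ≤ a ≤ 2n, are: b_a = (0,...,0,l,0,...,0) with l in position x_a for 1 ≤ a ≤ n, and b_{n+a} = (0,...,0,l,0,...,0) with l in position \bar{x}_{n-a+1} for 1 ≤ a ≤ n. Moreover ε_{i_{a+1}}(b_a) = 0 for 1 ≤ a ≤ 2n-1, and b_0 = f_0^l b_{2n}. -/

import Mathlib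

/- The perfect crystal B of level l for A_{2n}^{(2)}:
   elements (x_1,…,x_n,x̄_n,…,x̄_1) with x_i, x̄_i ≥ 0 and Σ (x_i + x̄_i) ≤ l.
   We encode an element as a pair of ℕ-indexed integer functions
   supported on 1..n. -/
structure AElt where
  x : ℕ → ℤ
  xb : ℕ → ℤ

namespace AElt

def sumA (n : ℕ) (b : AElt) : ℤ := ∑ i ∈ Finset.Icc 1 n, (b.x i + b.xb i)

/-- membership in the level `l` perfect crystal `B` for `A_{2n}^{(2)}` -/
def mem (n l : ℕ) (b : AElt) : Prop :=
  (∀ i, 0 ≤ b.x i) ∧ (∀ i, 0 ≤ b.xb i) ∧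
  (∀ i, i = 0 ∨ n < i → b.x i = 0 ∧ b.xb i = 0) ∧
  sumA n b ≤ l

/-- the Kashiwara operator `f_0` -/
def f0 (b : AElt) : AElt :=
  if b.xb 1 ≤ b.x 1 then ⟨Function.update b.x 1 (b.x 1 + 1), b.xb⟩
  else ⟨b.x, Function.update b.xb 1 (b.xb 1 - 1)⟩

/-- the Kashiwara operator `f_i`, `1 ≤ i ≤ n-1` -/
def fmid (i : ℕ) (b : AElt) : AElt :=
  if b.xb (i+1) ≤ b.x (i+1) then
    ⟨Function.update (Function.update b.x i (b.x i - 1)) (i+1) (b.x (i+1) + 1), b.xb⟩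
  else
    ⟨b.x, Function.update (Function.update b.xb (i+1) (b.xb (i+1) - 1)) i (b.xb i + 1)⟩

/-- the Kashiwara operator `f_n` -/
def flast (n : ℕ) (b : AElt) : AElt :=
  ⟨Function.update b.x n (b.x n - 1), Function.update b.xb n (b.xb n + 1)⟩

/-- the Kashiwara operator `f_i`, `0 ≤ i ≤ n` -/
def f (n i : ℕ) (b : AElt) : AElt :=
  if i = 0 then f0 b else if i = n then flast n b else fmid i b

/-- `φ_i(b)`; `f_i b` is defined exactly when `φ_i(b) > 0` -/
def phi (n l i : ℕ) (b : AElt) : ℤ :=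
  if i = 0 then (l : ℤ) - sumA n b + 2 * max (b.xb 1 - b.x 1) 0
  else if i = n then b.x n
  else b.x i + max (b.xb (i+1) - b.x (i+1)) 0

/-- `ε_i(b)` for the `A_{2n}^{(2)}` perfect crystal -/
def eps (n l i : ℕ) (b : AElt) : ℤ :=
  if i = 0 then (l : ℤ) - sumA n b + 2 * max (b.x 1 - b.xb 1) 0
  else if i = n then b.xb n
  else b.xb i + max (b.x (i+1) - b.xb (i+1)) 0

end AElt

namespace AElt

/-- the index sequence `i_a = a-1` for `1 ≤ a ≤ n+1`, `i_a = 2n+1-a` for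
`n+2 ≤ a ≤ 2n` -/
def idx (n a : ℕ) : ℕ := if a ≤ n + 1 then a - 1 else 2 * n + 1 - a

/-- the ground-state element `(0,…,0)` -/
def bzero : AElt := ⟨fun _ => 0, fun _ => 0⟩

/-- element with `l` in position `x_p`, zeros elsewhere -/
def unitX (l p : ℕ) : AElt := ⟨fun i => if i = p then (l : ℤ) else 0, fun _ => 0⟩

/-- element with `l` in position `x̄_p`, zeros elsewhere -/
def unitXb (l p : ℕ) : AElt := ⟨fun _ => 0, fun i => if i = p then (l : ℤ) else 0⟩

/-- the extremal elements `b_0 = (0,…,0)`, `b_a = f_{i_a}^{max} b_{a-1}` -/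
def bseq (n l : ℕ) : ℕ → AElt
  | 0 => bzero
  | a + 1 => (f n (idx n (a+1)))^[(phi n l (idx n (a+1)) (bseq n l a)).toNat] (bseq n l a)

/-! ### auxiliary material -/

theorem ext' {a b : AElt} (h1 : a.x = b.x) (h2 : a.xb = b.xb) : a = b := by
  cases a; cases b; simp_all

/-- intermediate state: `u` at `x_i`, `v` at `x_{i+1}` -/
def twoX (i : ℕ) (u v : ℤ) : AElt :=
  ⟨fun j => if j = i then u else if j = i+1 then v else 0, fun _ => 0⟩

/-- intermediate state: `u` at `x̄_i`, `v` at `x̄_{i+1}` -/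
def twoXb (i : ℕ) (u v : ℤ) : AElt :=
  ⟨fun _ => 0, fun j => if j = i then u else if j = i+1 then v else 0⟩

/-- intermediate state: `u` at `x_n`, `v` at `x̄_n` -/
def mixN (n : ℕ) (u v : ℤ) : AElt :=
  ⟨fun j => if j = n then u else 0, fun j => if j = n then v else 0⟩

theorem f0_iter_bzero (n : ℕ) : ∀ k : ℕ, (f n 0)^[k] bzero = unitX k 1 := by
  intro k
  induction k with
  | zero =>
    apply ext' <;> funext j <;> simp [bzero, unitX]
  | succ k ih =>
    rw [Function.iterate_succ_apply', ih]
    apply ext' <;> funext j <;>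
      simp [f, f0, unitX, Function.update_apply] <;> split_ifs <;> push_cast <;> omega

theorem fmid_iterX (n l : ℕ) {i : ℕ} (hi : 1 ≤ i) (hin : i + 1 ≤ n) :
    ∀ k : ℕ, (f n i)^[k] (unitX l i) = twoX i ((l:ℤ) - k) k := by
  intro k
  induction k with
  | zero =>
    apply ext' <;> funext j <;>
      simp [unitX, twoX] <;> split_ifs <;> omega
  | succ k ih =>
    rw [Function.iterate_succ_apply', ih]
    have h0 : i ≠ 0 := by omega
    have hn' : i ≠ n := by omega
    have hcond : (twoX i ((l:ℤ) - k) k).xb (i+1) ≤ (twoX i ((l:ℤ) - k) k).x (i+1) := by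
      simp [twoX, show i + 1 ≠ i from by omega]
    rw [f, if_neg h0, if_neg hn', fmid, if_pos hcond]
    apply ext' <;> funext j <;>
      simp [twoX, Function.update_apply] <;> split_ifs <;> push_cast <;> omega

theorem flast_iter (n l : ℕ) (hn : 1 ≤ n) :
    ∀ k : ℕ, (f n n)^[k] (unitX l n) = mixN n ((l:ℤ) - k) k := by
  intro k
  induction k with
  | zero =>
    apply ext' <;> funext j <;> simp [unitX, mixN] <;> split_ifs <;> omega
  | succ k ih =>
    rw [Function.iterate_succ_apply', ih]
    have h0 : n ≠ 0 := by omega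
    rw [f, if_neg h0, if_pos rfl, flast]
    apply ext' <;> funext j <;>
      simp [mixN, Function.update_apply] <;> split_ifs <;> push_cast <;> omega

theorem fmid_iterXb (n l : ℕ) {i : ℕ} (hi : 1 ≤ i) (hin : i + 1 ≤ n) :
    ∀ k : ℕ, k ≤ l → (f n i)^[k] (unitXb l (i+1)) = twoXb i k ((l:ℤ) - k) := by
  intro k
  induction k with
  | zero =>
    intro _
    apply ext' <;> funext j <;>
      simp [unitXb, twoXb] <;> (try split_ifs) <;> omega
  | succ k ih =>
    intro hk
    rw [Function.iterate_succ_apply', ih (by omega)]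
    have h0 : i ≠ 0 := by omega
    have hn' : i ≠ n := by omega
    have hcond : ¬ (twoXb i (k:ℤ) ((l:ℤ) - k)).xb (i+1) ≤ (twoXb i (k:ℤ) ((l:ℤ) - k)).x (i+1) := by
      simp [twoXb, show i + 1 ≠ i from by omega]
      omega
    rw [f, if_neg h0, if_neg hn', fmid, if_neg hcond]
    apply ext' <;> funext j <;>
      simp [twoXb, Function.update_apply] <;> split_ifs <;> push_cast <;> omega

theorem f0_iterXb (n l : ℕ) :
    ∀ k : ℕ, k ≤ l → (f n 0)^[k] (unitXb l 1) =
      (⟨fun _ => 0, fun j => if j = 1 then (l:ℤ) - k else 0⟩ : AElt) := by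
  intro k
  induction k with
  | zero =>
    intro _
    apply ext' <;> funext j <;> simp [unitXb] <;> split_ifs <;> omega
  | succ k ih =>
    intro hk
    rw [Function.iterate_succ_apply', ih (by omega)]
    have hcond : ¬ ((⟨fun _ => 0, fun j => if j = 1 then (l:ℤ) - k else 0⟩ : AElt)).xb 1 ≤
        ((⟨fun _ => 0, fun j => if j = 1 then (l:ℤ) - k else 0⟩ : AElt)).x 1 := by
      simp; omega
    rw [f, if_pos rfl, f0, if_neg hcond]
    apply ext' <;> funext j <;>
      simp [Function.update_apply] <;> split_ifs <;> push_cast <;> omega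

end AElt

/-- in the `A_{2n}^{(2)}` perfect crystal of level `l`, the extremal
elements satisfy `b_a = (0,…,0,l,0,…,0)` with `l` in position `x_a` for
`1 ≤ a ≤ n`, and `b_{n+a}` has `l` in position `x̄_{n-a+1}` for `1 ≤ a ≤ n`;
moreover `ε_{i_{a+1}}(b_a) = 0` for `1 ≤ a ≤ 2n-1`, and `b_0 = f_0^l b_{2n}`. -/
theorem A2n2_extremal_elements (n l : ℕ) (hn : 2 ≤ n) (hl : 1 ≤ l) :
    (∀ a, 1 ≤ a → a ≤ n → AElt.bseq n l a = AElt.unitX l a) ∧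
    (∀ a, 1 ≤ a → a ≤ n → AElt.bseq n l (n + a) = AElt.unitXb l (n - a + 1)) ∧
    (∀ a, 1 ≤ a → a ≤ 2*n - 1 →
      AElt.eps n l (AElt.idx n (a+1)) (AElt.bseq n l a) = 0) ∧
    (AElt.f n 0)^[l] (AElt.bseq n l (2*n)) = AElt.bseq n l 0 := by
  have part1 : ∀ a, 1 ≤ a → a ≤ n → AElt.bseq n l a = AElt.unitX l a := by
    intro a
    induction a with
    | zero => omega
    | succ a ih =>
      intro _ han
      rcases Nat.eq_zero_or_pos a with ha0 | ha1
      · subst ha0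
        rw [AElt.bseq, AElt.bseq]
        have hidx : AElt.idx n 1 = 0 := by simp [AElt.idx]
        have hphi : AElt.phi n l 0 AElt.bzero = l := by
          simp [AElt.phi, AElt.sumA, AElt.bzero]
        rw [hidx, hphi]
        simpa using AElt.f0_iter_bzero n l
      · rw [AElt.bseq, ih ha1 (by omega)]
        have hidx : AElt.idx n (a+1) = a := by
          simp [AElt.idx, show a + 1 ≤ n + 1 by omega]
        have hphi : AElt.phi n l a (AElt.unitX l a) = l := by
          simp [AElt.phi, AElt.unitX, show a ≠ 0 by omega, show a ≠ n by omega,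
            show a + 1 ≠ a from by omega]
        rw [hidx, hphi]
        rw [show ((l:ℤ)).toNat = l from by simp,
          AElt.fmid_iterX n l ha1 (by omega) l]
        apply AElt.ext' <;> funext j <;>
          simp [AElt.twoX, AElt.unitX] <;> (try split_ifs) <;> omega
  have part2 : ∀ a, 1 ≤ a → a ≤ n → AElt.bseq n l (n + a) = AElt.unitXb l (n - a + 1) := by
    intro a
    induction a with
    | zero => omega
    | succ a ih =>
      intro _ han
      rcases Nat.eq_zero_or_pos a with ha0 | ha1
      · subst ha0
        rw [AElt.bseq, part1 n (by omega) le_rfl]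
        have hidx : AElt.idx n (n+1) = n := by simp [AElt.idx]
        have hphi : AElt.phi n l n (AElt.unitX l n) = l := by
          simp [AElt.phi, AElt.unitX, show n ≠ 0 by omega]
        rw [hidx, hphi]
        rw [show ((l:ℤ)).toNat = l from by simp, AElt.flast_iter n l (by omega) l]
        apply AElt.ext' <;> funext j <;>
          simp [AElt.mixN, AElt.unitXb] <;> split_ifs <;> omega
      · rw [show n + (a+1) = (n + a) + 1 from by omega, AElt.bseq,
          ih ha1 (by omega)]
        have hidx : AElt.idx n (n + a + 1) = n - a := by
          unfold AElt.idx
          rw [if_neg (by omega)]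
          omega
        have hia : n - a + 1 = (n - a) + 1 := rfl
        have h1 : 1 ≤ n - a := by omega
        have h2 : (n - a) + 1 ≤ n := by omega
        have hphi : AElt.phi n l (n - a) (AElt.unitXb l ((n-a)+1)) = l := by
          simp [AElt.phi, AElt.unitXb, show n - a ≠ 0 by omega,
            show n - a ≠ n by omega, show n - a ≠ n - a + 1 from by omega]
        rw [hidx, hia, hphi]
        rw [show ((l:ℤ)).toNat = l from by simp,
          AElt.fmid_iterXb n l h1 h2 l le_rfl]
        apply AElt.ext' <;> funext j <;>
          simp [AElt.twoXb, AElt.unitXb] <;> split_ifs <;> omega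
  refine ⟨part1, part2, ?_, ?_⟩
  · intro a ha1 ha2
    rcases lt_trichotomy a n with h | h | h
    · have hidx : AElt.idx n (a+1) = a := by
        simp [AElt.idx, show a + 1 ≤ n + 1 by omega]
      rw [hidx, part1 a ha1 (by omega)]
      simp [AElt.eps, AElt.unitX, show a ≠ 0 by omega, show a ≠ n by omega,
        show a + 1 ≠ a from by omega]
    · have hidx : AElt.idx n (a+1) = a := by simp [AElt.idx, h]
      rw [hidx, part1 a ha1 (by omega)]
      simp [AElt.eps, AElt.unitX, show a ≠ 0 by omega, show n ≠ 0 by omega, h]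
    · set j := a - n with hj
      have haj : a = n + j := by omega
      have hj1 : 1 ≤ j := by omega
      have hj2 : j ≤ n - 1 := by omega
      rw [haj, part2 j hj1 (by omega)]
      have hidx : AElt.idx n (n + j + 1) = n - j := by
        unfold AElt.idx
        rw [if_neg (by omega)]
        omega
      rw [hidx]
      have hne0 : n - j ≠ 0 := by omega
      have hnen : n - j ≠ n := by omega
      have hne : n - j ≠ n - j + 1 := by omega
      simp [AElt.eps, AElt.unitXb, hne0, hnen, hne]
  · rw [show 2*n = n + n from by ring, part2 n (by omega) le_rfl,
      show n - n + 1 = 1 from by omega, AElt.f0_iterXb n l l le_rfl, AElt.bseq]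
    apply AElt.ext' <;> funext j <;> simp [AElt.bzero]
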